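/- Let (X,d,μ) be an η-Ahlfors regular quasi-metric measure space with η > 0 and triangular constant κ ≥ 1, let ρ be the third order hypermetric induced by d, and let 0 < γ < 2η. Then for every pair f, g of nonnegative measurable functions on X and every x ∈ X, T^γ(f,g)(x) ≤ (2κ)^γ I_{η−γ/2}(g · I_{η−γ/2}f)(x). -/

import Mathlib

open MeasureTheory ENNReal

/-- The third order hypermetric induced by `d`:
`ρ(x,y,z) = inf_{u ∈ X} max {d(x,u), d(y,u), d(z,u)}`. -/
noncomputable def hyperRho {X : Type*} (d : X → X → ℝ) (x y z : X) : ℝ :=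
  ⨅ u : X, max (d x u) (max (d y u) (d z u))

/-- `d` is a quasi-metric on `X` with triangular constant `κ`. -/
def IsQuasiMetric {X : Type*} (d : X → X → ℝ) (κ : ℝ) : Prop :=
  (∀ x y, 0 ≤ d x y) ∧ (∀ x y, (d x y = 0 ↔ x = y)) ∧ (∀ x y, d x y = d y x) ∧
    (∀ x y z, d x z ≤ κ * (d x y + d y z))

/-- `(X,d,μ)` is `η`-Ahlfors regular with constants `a ≤ A`. -/
def IsAhlfors {X : Type*} [MeasurableSpace X] (d : X → X → ℝ) (μ : Measure X)
    (η a A : ℝ) : Prop :=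
  ∀ x : X, ∀ r : ℝ, 0 < r →
    ENNReal.ofReal (a * r ^ η) ≤ μ {y | d x y < r} ∧
      μ {y | d x y < r} ≤ ENNReal.ofReal (A * r ^ η)

/-- The bilinear fractional integral operator
`T^γ(f,g)(x) = ∬ f(y) g(z) ρ(x,y,z)^{-γ} dμ(y) dμ(z)`
(with the convention `0 ^ (-γ) = ∞` for `γ > 0`, as in `ENNReal.rpow`). -/
noncomputable def Tgamma {X : Type*} [MeasurableSpace X] (d : X → X → ℝ)
    (μ : Measure X) (γ : ℝ) (f g : X → ℝ≥0∞) (x : X) : ℝ≥0∞ :=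
  ∫⁻ y, ∫⁻ z, f y * g z * (ENNReal.ofReal (hyperRho d x y z)) ^ (-γ) ∂μ ∂μ

/-- The linear fractional integral operator of order `β` in the `η`-dimensional
space `(X,d,μ)`: `I_β h(x) = ∫ h(y) d(x,y)^{β-η} dμ(y)`. -/
noncomputable def fracInt {X : Type*} [MeasurableSpace X] (d : X → X → ℝ)
    (μ : Measure X) (β η : ℝ) (h : X → ℝ≥0∞) (x : X) : ℝ≥0∞ :=
  ∫⁻ y, h y * (ENNReal.ofReal (d x y)) ^ (β - η) ∂μ

/-- The `L^p(μ)` norm of a nonnegative function, `p` a real exponent. -/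
noncomputable def lpNorm {X : Type*} [MeasurableSpace X] (μ : Measure X) (p : ℝ)
    (h : X → ℝ≥0∞) : ℝ≥0∞ :=
  (∫⁻ x, (h x) ^ p ∂μ) ^ (1 / p)

private lemma inv_le_aux {C D E : ℝ≥0∞} (hC0 : C ≠ 0) (hCt : C ≠ ⊤) (hE : E ≠ ⊤)
    (h : D ≤ C * E) : E⁻¹ ≤ C * D⁻¹ := by
  rcases eq_or_ne D 0 with h0 | h0
  · simp [h0, ENNReal.mul_top hC0]
  · calc E⁻¹ = C * (C⁻¹ * E⁻¹) := by
          rw [← mul_assoc, ENNReal.mul_inv_cancel hC0 hCt, one_mul]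
    _ = C * (C * E)⁻¹ := by rw [ENNReal.mul_inv (Or.inl hC0) (Or.inl hCt)]
    _ ≤ C * D⁻¹ := mul_le_mul_right (ENNReal.inv_le_inv.2 h) C

/-- Pointwise bound `T^γ(f,g)(x) ≤ (2κ)^γ I_{η-γ/2}(g · I_{η-γ/2}f)(x)`. -/
theorem statement8 {X : Type*} [MeasurableSpace X]
    (d : X → X → ℝ) (κ : ℝ) (hκ : 1 ≤ κ) (hqm : IsQuasiMetric d κ)
    (hd_meas : Measurable fun p : X × X => d p.1 p.2)
    (μ : Measure X) (η : ℝ) (hη : 0 < η)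
    (a A : ℝ) (ha : 0 < a) (haA : a ≤ A) (hAhl : IsAhlfors d μ η a A)
    (γ : ℝ) (hγ0 : 0 < γ) (hγ2η : γ < 2 * η)
    (f g : X → ℝ≥0∞) (hf : Measurable f) (hg : Measurable g) (x : X) :
    Tgamma d μ γ f g x ≤
      ENNReal.ofReal ((2 * κ) ^ γ) *
        fracInt d μ (η - γ / 2) η
          (fun z => g z * fracInt d μ (η - γ / 2) η f z) x := by
  haveI : Nonempty X := ⟨x⟩
  obtain ⟨hd0, hdeq, hdsymm, hdtri⟩ := hqm
  have hκ0 : (0:ℝ) < 2 * κ := by linarith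
  -- σ-finiteness
  haveI : SigmaFinite μ := by
    refine ⟨⟨⟨fun n => {y | d x y < n + 1}, fun _ => trivial, fun n => ?_, ?_⟩⟩⟩
    · calc μ {y | d x y < (n:ℝ) + 1} ≤ ENNReal.ofReal (A * ((n:ℝ)+1) ^ η) :=
          (hAhl x ((n:ℝ)+1) (by positivity)).2
      _ < ⊤ := ofReal_lt_top
    · ext y
      simp only [Set.mem_iUnion, Set.mem_setOf_eq, Set.mem_univ, iff_true]
      obtain ⟨n, hn⟩ := exists_nat_gt (d x y)
      exact ⟨n, by linarith⟩
  set C := ENNReal.ofReal ((2 * κ) ^ γ) with hC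
  have hC0 : C ≠ 0 := by
    simp [hC, ENNReal.ofReal_eq_zero, not_le]
    positivity
  have hCt : C ≠ ⊤ := ofReal_ne_top
  set P : X → ℝ≥0∞ := fun z => (ENNReal.ofReal (d x z)) ^ (-(γ/2)) with hP
  set Q : X → X → ℝ≥0∞ := fun z y => (ENNReal.ofReal (d z y)) ^ (-(γ/2)) with hQ
  -- key pointwise bound
  have key : ∀ y z : X, (ENNReal.ofReal (hyperRho d x y z)) ^ (-γ) ≤ C * (Q z y * P z) := by
    intro y z
    set ρ := hyperRho d x y z with hρ
    have hρ0 : 0 ≤ ρ := Real.iInf_nonneg fun u => le_max_of_le_left (hd0 x u)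
    have h1 : d x z ≤ 2 * κ * ρ := by
      rw [← div_le_iff₀' hκ0]
      refine le_ciInf fun u => ?_
      rw [div_le_iff₀' hκ0]
      calc d x z ≤ κ * (d x u + d u z) := hdtri x u z
      _ = κ * (d x u + d z u) := by rw [hdsymm u z]
      _ ≤ κ * (max (d x u) (max (d y u) (d z u)) + max (d x u) (max (d y u) (d z u))) := by
          have h1' : d x u ≤ max (d x u) (max (d y u) (d z u)) := le_max_left _ _
          have h2' : d z u ≤ max (d x u) (max (d y u) (d z u)) :=
            le_max_of_le_right (le_max_right _ _)
          nlinarith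
      _ = 2 * κ * max (d x u) (max (d y u) (d z u)) := by ring
    have h2 : d z y ≤ 2 * κ * ρ := by
      rw [← div_le_iff₀' hκ0]
      refine le_ciInf fun u => ?_
      rw [div_le_iff₀' hκ0]
      calc d z y = d y z := hdsymm z y
      _ ≤ κ * (d y u + d u z) := hdtri y u z
      _ = κ * (d y u + d z u) := by rw [hdsymm u z]
      _ ≤ κ * (max (d x u) (max (d y u) (d z u)) + max (d x u) (max (d y u) (d z u))) := by
          have h1' : d y u ≤ max (d x u) (max (d y u) (d z u)) :=
            le_max_of_le_right (le_max_left _ _)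
          have h2' : d z u ≤ max (d x u) (max (d y u) (d z u)) :=
            le_max_of_le_right (le_max_right _ _)
          nlinarith
      _ = 2 * κ * max (d x u) (max (d y u) (d z u)) := by ring
    -- real inequality
    have hzy0 := hd0 z y
    have hxz0 := hd0 x z
    have hreal : (d z y) ^ (γ/2) * (d x z) ^ (γ/2) ≤ (2*κ) ^ γ * ρ ^ γ := by
      calc (d z y) ^ (γ/2) * (d x z) ^ (γ/2) = (d z y * d x z) ^ (γ/2) :=
            (Real.mul_rpow hzy0 hxz0).symm
      _ ≤ ((2*κ*ρ) * (2*κ*ρ)) ^ (γ/2) := by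
          apply Real.rpow_le_rpow (by positivity) ?_ (by positivity)
          exact mul_le_mul h2 h1 hxz0 (by positivity)
      _ = ((2*κ*ρ) ^ (2:ℝ)) ^ (γ/2) := by
          rw [Real.rpow_two]; ring
      _ = (2*κ*ρ) ^ γ := by
          rw [← Real.rpow_mul (by positivity : (0:ℝ) ≤ 2*κ*ρ)]
          congr 1; ring
      _ = (2*κ) ^ γ * ρ ^ γ := Real.mul_rpow (le_of_lt hκ0) hρ0
    -- move to ENNReal
    have hg2 : (0:ℝ) ≤ γ/2 := by positivity
    have hD1t : (ENNReal.ofReal (d z y)) ^ (γ/2) ≠ ⊤ :=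
      ENNReal.rpow_ne_top_of_nonneg hg2 ofReal_ne_top
    have hD2t : (ENNReal.ofReal (d x z)) ^ (γ/2) ≠ ⊤ :=
      ENNReal.rpow_ne_top_of_nonneg hg2 ofReal_ne_top
    have hEt : (ENNReal.ofReal ρ) ^ γ ≠ ⊤ :=
      ENNReal.rpow_ne_top_of_nonneg hγ0.le ofReal_ne_top
    have hDE : (ENNReal.ofReal (d z y)) ^ (γ/2) * (ENNReal.ofReal (d x z)) ^ (γ/2)
        ≤ C * (ENNReal.ofReal ρ) ^ γ := by
      rw [ENNReal.ofReal_rpow_of_nonneg hzy0 hg2, ENNReal.ofReal_rpow_of_nonneg hxz0 hg2,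
        ENNReal.ofReal_rpow_of_nonneg hρ0 hγ0.le, ← ENNReal.ofReal_mul (by positivity),
        hC, ← ENNReal.ofReal_mul (by positivity)]
      exact ENNReal.ofReal_le_ofReal hreal
    simp only [hQ, hP, ENNReal.rpow_neg]
    rw [← ENNReal.mul_inv (Or.inr hD2t) (Or.inl hD1t)]
    exact inv_le_aux hC0 hCt hEt hDE
  -- measurability
  have hexp : η - γ/2 - η = -(γ/2) := by ring
  have hQm' : Measurable fun p : X × X => Q p.1 p.2 :=
    (ENNReal.measurable_ofReal.comp hd_meas).pow_const _
  have hQm : Measurable fun p : X × X => Q p.2 p.1 := hQm'.comp measurable_swap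
  have hPm : Measurable P :=
    (ENNReal.measurable_ofReal.comp (hd_meas.comp measurable_prodMk_left)).pow_const _
  have hQzm : ∀ z, Measurable fun y => Q z y := fun z =>
    (ENNReal.measurable_ofReal.comp (hd_meas.comp measurable_prodMk_left)).pow_const _
  have hI : Measurable fun z => ∫⁻ y, f y * Q z y ∂μ :=
    Measurable.lintegral_prod_right' ((hf.comp measurable_snd).mul hQm')
  have hF : Measurable fun p : X × X => (C * (f p.1 * Q p.2 p.1)) * (g p.2 * P p.2) :=
    (measurable_const.mul ((hf.comp measurable_fst).mul hQm)).mul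
      ((hg.comp measurable_snd).mul (hPm.comp measurable_snd))
  have hmz : Measurable fun z => (g z * ∫⁻ y, f y * Q z y ∂μ) * P z :=
    (hg.mul hI).mul hPm
  calc Tgamma d μ γ f g x
      ≤ ∫⁻ y, ∫⁻ z, (C * (f y * Q z y)) * (g z * P z) ∂μ ∂μ := by
        refine lintegral_mono fun y => lintegral_mono fun z => ?_
        calc f y * g z * (ENNReal.ofReal (hyperRho d x y z)) ^ (-γ)
            ≤ f y * g z * (C * (Q z y * P z)) := mul_le_mul_right (key y z) _
        _ = (C * (f y * Q z y)) * (g z * P z) := by ring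
    _ = ∫⁻ z, ∫⁻ y, (C * (f y * Q z y)) * (g z * P z) ∂μ ∂μ :=
        lintegral_lintegral_swap hF.aemeasurable
    _ = ∫⁻ z, C * ((g z * ∫⁻ y, f y * Q z y ∂μ) * P z) ∂μ := by
        refine lintegral_congr fun z => ?_
        rw [lintegral_mul_const _ (f := fun y => C * (f y * Q z y))
            (measurable_const.mul (hf.mul (hQzm z))),
          lintegral_const_mul _ (f := fun y => f y * Q z y) (hf.mul (hQzm z))]
        ring
    _ = C * ∫⁻ z, (g z * ∫⁻ y, f y * Q z y ∂μ) * P z ∂μ := lintegral_const_mul C hmz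
    _ = ENNReal.ofReal ((2 * κ) ^ γ) *
        fracInt d μ (η - γ / 2) η (fun z => g z * fracInt d μ (η - γ / 2) η f z) x := by
        simp only [fracInt, hexp, hQ, hP, hC]
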